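/- Let G be a connected graph with a cut vertex u, and let G_1, G_2 be connected subgraphs with G = G_1 ∪ G_2 and V(G_1) ∩ V(G_2) = {u}. Then W(G) = W(G_1) + W(G_2) + (|V(G_1)|-1)·D_{G_2}(u) + (|V(G_2)|-1)·D_{G_1}(u). -/

import Mathlib

open Finset SimpleGraph

/-- The sum of distances from `u` to all vertices of `G`. -/
noncomputable def distSum {V : Type*} [Fintype V] (G : SimpleGraph V) (u : V) : ℕ :=
  ∑ v, G.dist u v

/-- The Wiener index of `G`: the sum of distances over all unordered pairs of vertices. -/
noncomputable def wienerIndex {V : Type*} [Fintype V] (G : SimpleGraph V) : ℕ :=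
  (∑ u : V, ∑ v : V, G.dist u v) / 2

section Aux

variable {V : Type*} [DecidableEq V] {G : SimpleGraph V} {A B : Finset V} {u : V}

/-- Any walk in `G` ending in `A` can be projected to a walk in `G.induce A`
starting at `x` (if `x ∈ A`) or at `u` (if not), without increasing length. -/
lemma walk_project (hA : u ∈ A) (hI : A ∩ B = {u})
    (hedge : ∀ x y, G.Adj x y → (x ∈ A ∧ y ∈ A) ∨ (x ∈ B ∧ y ∈ B)) :
    ∀ {x y : V} (p : G.Walk x y) (hy : y ∈ A),
      (∀ hx : x ∈ A, ∃ q : (G.induce (A : Set V)).Walk ⟨x, by simpa using hx⟩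
          ⟨y, by simpa using hy⟩, q.length ≤ p.length) ∧
      (x ∉ A → ∃ q : (G.induce (A : Set V)).Walk ⟨u, by simpa using hA⟩
          ⟨y, by simpa using hy⟩, q.length ≤ p.length) := by
  intro x y p
  induction p with
  | nil =>
    intro hy
    exact ⟨fun hx => ⟨SimpleGraph.Walk.nil, by simp⟩, fun hx => absurd hy hx⟩
  | @cons a z y h p ih =>
    intro hy
    by_cases hz : z ∈ A
    · obtain ⟨q, hq⟩ := (ih hy).1 hz
      constructor
      · intro hx
        refine ⟨SimpleGraph.Walk.cons (by simpa using h) q, ?_⟩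
        simpa using Nat.succ_le_succ hq
      · intro hx
        have hB' : a ∈ B ∧ z ∈ B := (hedge a z h).resolve_left (fun h' => hx h'.1)
        have hzu : z = u := by
          have : z ∈ A ∩ B := Finset.mem_inter.mpr ⟨hz, hB'.2⟩
          rw [hI] at this; simpa using this
        subst hzu
        exact ⟨q, by simpa using Nat.le_succ_of_le hq⟩
    · have hB' : a ∈ B ∧ z ∈ B := (hedge a z h).resolve_left (fun h' => hz h'.2)
      obtain ⟨q, hq⟩ := (ih hy).2 hz
      constructor
      · intro hx
        have hxu : a = u := by
          have : a ∈ A ∩ B := Finset.mem_inter.mpr ⟨hx, hB'.1⟩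
          rw [hI] at this; simpa using this
        subst hxu
        exact ⟨q, by simpa using Nat.le_succ_of_le hq⟩
      · intro _
        exact ⟨q, by simpa using Nat.le_succ_of_le hq⟩

/-- Distances inside `A` are computed in the induced subgraph. -/
lemma dist_induce_eq (hG : G.Connected) (hA : u ∈ A) (hI : A ∩ B = {u})
    (hedge : ∀ x y, G.Adj x y → (x ∈ A ∧ y ∈ A) ∨ (x ∈ B ∧ y ∈ B))
    {x y : V} (hx : x ∈ A) (hy : y ∈ A) :
    (G.induce (A : Set V)).dist ⟨x, by simpa using hx⟩ ⟨y, by simpa using hy⟩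
      = G.dist x y := by
  obtain ⟨p, hp⟩ := hG.exists_walk_length_eq_dist x y
  obtain ⟨q0, hq0⟩ := (walk_project hA hI hedge p hy).1 hx
  apply le_antisymm
  · exact (SimpleGraph.dist_le q0).trans (hp ▸ hq0)
  · obtain ⟨q, hq⟩ := q0.reachable.exists_walk_length_eq_dist
    have := SimpleGraph.dist_le
      (q.map (SimpleGraph.Embedding.induce (A : Set V)).toHom)
    exact le_of_le_of_eq this ((SimpleGraph.Walk.length_map _ _).trans hq)

lemma mem_support_of_cross (hI : A ∩ B = {u})
    (hedge : ∀ x y, G.Adj x y → (x ∈ A ∧ y ∈ A) ∨ (x ∈ B ∧ y ∈ B)) :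
    ∀ {x y : V} (p : G.Walk x y), x ∈ A → y ∉ A → u ∈ p.support := by
  intro x y p
  induction p with
  | nil => intro hx hy; exact absurd hx hy
  | @cons a z y h p ih =>
    intro hx hy
    by_cases hz : z ∈ A
    · simpa [SimpleGraph.Walk.support_cons] using Or.inr (ih hz hy)
    · have hB' : a ∈ B ∧ z ∈ B := (hedge a z h).resolve_left (fun h' => hz h'.2)
      have hxu : a = u := by
        have : a ∈ A ∩ B := Finset.mem_inter.mpr ⟨hx, hB'.1⟩
        rw [hI] at this; simpa using this
      subst hxu
      exact SimpleGraph.Walk.start_mem_support _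

lemma dist_cross (hG : G.Connected) (hI : A ∩ B = {u})
    (hedge : ∀ x y, G.Adj x y → (x ∈ A ∧ y ∈ A) ∨ (x ∈ B ∧ y ∈ B))
    {x y : V} (hx : x ∈ A) (hy : y ∈ B) :
    G.dist x y = G.dist x u + G.dist u y := by
  by_cases hyA : y ∈ A
  · have hyu : y = u := by
      have : y ∈ A ∩ B := Finset.mem_inter.mpr ⟨hyA, hy⟩
      rw [hI] at this; simpa using this
    subst hyu; simp [SimpleGraph.dist_self]
  · refine le_antisymm hG.dist_triangle ?_
    obtain ⟨p, hp⟩ := hG.exists_walk_length_eq_dist x y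
    have hu : u ∈ p.support := mem_support_of_cross hI hedge p hx hyA
    calc G.dist x u + G.dist u y
        ≤ (p.takeUntil u hu).length + (p.dropUntil u hu).length :=
          Nat.add_le_add (SimpleGraph.dist_le _) (SimpleGraph.dist_le _)
      _ = p.length := by
          rw [← SimpleGraph.Walk.length_append, p.take_spec hu]
      _ = G.dist x y := hp

lemma even_double_sum {α : Type*} [DecidableEq α] (f : α → α → ℕ)
    (hsymm : ∀ x y, f x y = f y x) (hdiag : ∀ x, f x x = 0) (s : Finset α) :
    Even (∑ x ∈ s, ∑ y ∈ s, f x y) := by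
  induction s using Finset.induction_on with
  | empty => simp
  | @insert a s ha ih =>
    simp_rw [Finset.sum_insert ha]
    rw [hdiag, Finset.sum_add_distrib]
    have h1 : ∑ x ∈ s, f x a = ∑ y ∈ s, f a y :=
      Finset.sum_congr rfl fun x _ => hsymm x a
    obtain ⟨k, hk⟩ := ih
    exact ⟨(∑ y ∈ s, f a y) + k, by rw [hk, h1]; ring⟩

lemma sum_coe_finset (A : Finset V) (f : V → ℕ) :
    ∑ x : (A : Set V), f ↑x = ∑ x ∈ A, f x := by
  rw [Finset.sum_set_coe]
  simp

end Aux

/-- Decomposition of the Wiener index at a cut vertex: if G is the union of two connected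
induced subgraphs G₁ = G[A], G₂ = G[B] sharing only the vertex u, then
W(G) = W(G₁) + W(G₂) + (|A|-1)·D_{G₂}(u) + (|B|-1)·D_{G₁}(u). -/
theorem stmt6 {V : Type*} [Fintype V] [DecidableEq V] (G : SimpleGraph V) (hG : G.Connected)
    (u : V) (A B : Finset V) (hA : u ∈ A) (hB : u ∈ B)
    (hU : A ∪ B = Finset.univ) (hI : A ∩ B = {u})
    (hedge : ∀ x y, G.Adj x y → (x ∈ A ∧ y ∈ A) ∨ (x ∈ B ∧ y ∈ B))
    (h1 : (G.induce (A : Set V)).Connected) (h2 : (G.induce (B : Set V)).Connected) :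
    wienerIndex G =
      wienerIndex (G.induce (A : Set V)) + wienerIndex (G.induce (B : Set V))
        + (A.card - 1) * distSum (G.induce (B : Set V)) ⟨u, by simpa using hB⟩
        + (B.card - 1) * distSum (G.induce (A : Set V)) ⟨u, by simpa using hA⟩ := by
  have hIB : B ∩ A = {u} := by rwa [Finset.inter_comm]
  have hedgeB : ∀ x y, G.Adj x y → (x ∈ B ∧ y ∈ B) ∨ (x ∈ A ∧ y ∈ A) :=
    fun x y h => (hedge x y h).symm
  have hdistA : ∀ (x y : V) (hx : x ∈ A) (hy : y ∈ A),
      (G.induce (A : Set V)).dist ⟨x, by simpa using hx⟩ ⟨y, by simpa using hy⟩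
        = G.dist x y := fun x y hx hy => dist_induce_eq hG hA hI hedge hx hy
  have hdistB : ∀ (x y : V) (hx : x ∈ B) (hy : y ∈ B),
      (G.induce (B : Set V)).dist ⟨x, by simpa using hx⟩ ⟨y, by simpa using hy⟩
        = G.dist x y := fun x y hx hy => dist_induce_eq hG hB hIB hedgeB hx hy
  have hWA : wienerIndex (G.induce (A : Set V))
      = (∑ x ∈ A, ∑ y ∈ A, G.dist x y) / 2 := by
    unfold wienerIndex
    congr 1
    calc ∑ x : (A : Set V), ∑ y : (A : Set V), (G.induce (A : Set V)).dist x y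
        = ∑ x : (A : Set V), ∑ y : (A : Set V), G.dist ↑x ↑y := by
          refine Finset.sum_congr rfl fun x _ => Finset.sum_congr rfl fun y _ => ?_
          exact hdistA ↑x ↑y (Finset.mem_coe.mp x.2) (Finset.mem_coe.mp y.2)
      _ = ∑ x : (A : Set V), ∑ y ∈ A, G.dist ↑x y := by
          exact Finset.sum_congr rfl fun x _ => sum_coe_finset A _
      _ = ∑ x ∈ A, ∑ y ∈ A, G.dist x y := sum_coe_finset A (fun x => ∑ y ∈ A, G.dist x y)
  have hWB : wienerIndex (G.induce (B : Set V))
      = (∑ x ∈ B, ∑ y ∈ B, G.dist x y) / 2 := by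
    unfold wienerIndex
    congr 1
    calc ∑ x : (B : Set V), ∑ y : (B : Set V), (G.induce (B : Set V)).dist x y
        = ∑ x : (B : Set V), ∑ y : (B : Set V), G.dist ↑x ↑y := by
          refine Finset.sum_congr rfl fun x _ => Finset.sum_congr rfl fun y _ => ?_
          exact hdistB ↑x ↑y (Finset.mem_coe.mp x.2) (Finset.mem_coe.mp y.2)
      _ = ∑ x : (B : Set V), ∑ y ∈ B, G.dist ↑x y := by
          exact Finset.sum_congr rfl fun x _ => sum_coe_finset B _
      _ = ∑ x ∈ B, ∑ y ∈ B, G.dist x y := sum_coe_finset B (fun x => ∑ y ∈ B, G.dist x y)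
  have hDA : distSum (G.induce (A : Set V)) ⟨u, by simpa using hA⟩
      = ∑ x ∈ A, G.dist u x := by
    unfold distSum
    calc ∑ v : (A : Set V), (G.induce (A : Set V)).dist ⟨u, by simpa using hA⟩ v
        = ∑ v : (A : Set V), G.dist u ↑v := by
          refine Finset.sum_congr rfl fun v _ => ?_
          exact hdistA u ↑v hA (Finset.mem_coe.mp v.2)
      _ = ∑ x ∈ A, G.dist u x := sum_coe_finset A _
  have hDB : distSum (G.induce (B : Set V)) ⟨u, by simpa using hB⟩
      = ∑ x ∈ B, G.dist u x := by
    unfold distSum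
    calc ∑ v : (B : Set V), (G.induce (B : Set V)).dist ⟨u, by simpa using hB⟩ v
        = ∑ v : (B : Set V), G.dist u ↑v := by
          refine Finset.sum_congr rfl fun v _ => ?_
          exact hdistB u ↑v hB (Finset.mem_coe.mp v.2)
      _ = ∑ x ∈ B, G.dist u x := sum_coe_finset B _
  -- splitting of the vertex set
  set A' := A.erase u with hA'def
  have hsubA : ∀ x, x ∈ A' → x ∈ A := fun x hx => Finset.mem_of_mem_erase hx
  have hdisj : Disjoint A' B := by
    rw [Finset.disjoint_left]
    intro x hx hxB
    have hxu : x = u := by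
      have : x ∈ A ∩ B := Finset.mem_inter.mpr ⟨hsubA x hx, hxB⟩
      rw [hI] at this; simpa using this
    exact (Finset.ne_of_mem_erase hx) hxu
  have huniv : A' ∪ B = Finset.univ := by
    rw [← hU]
    apply Finset.Subset.antisymm
    · exact Finset.union_subset_union (Finset.erase_subset _ _) le_rfl
    · intro x hx
      rcases Finset.mem_union.mp hx with h | h
      · by_cases hxu : x = u
        · exact Finset.mem_union_right _ (hxu ▸ hB)
        · exact Finset.mem_union_left _ (Finset.mem_erase.mpr ⟨hxu, h⟩)
      · exact Finset.mem_union_right _ h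
  have hsplit : ∀ f : V → ℕ, ∑ x : V, f x = ∑ x ∈ A', f x + ∑ x ∈ B, f x := by
    intro f
    rw [← Finset.sum_union hdisj, huniv]
  have hinsA : ∀ f : V → ℕ, ∑ x ∈ A, f x = f u + ∑ x ∈ A', f x := by
    intro f
    rw [hA'def, ← Finset.sum_insert (Finset.notMem_erase u A),
      Finset.insert_erase hA]
  have hD1' : ∑ x ∈ A', G.dist u x = ∑ x ∈ A, G.dist u x := by
    rw [hinsA (fun x => G.dist u x), SimpleGraph.dist_self, Nat.zero_add]
  have hD1'' : ∑ x ∈ A', G.dist x u = ∑ x ∈ A, G.dist u x := by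
    rw [← hD1']
    exact Finset.sum_congr rfl fun x _ => SimpleGraph.dist_comm
  have hSA : ∑ x ∈ A, ∑ y ∈ A, G.dist x y
      = (∑ x ∈ A', ∑ y ∈ A', G.dist x y) + 2 * ∑ x ∈ A, G.dist u x := by
    rw [hinsA (fun x => ∑ y ∈ A, G.dist x y)]
    have e2 : ∑ x ∈ A', ∑ y ∈ A, G.dist x y
        = ∑ x ∈ A', (G.dist x u + ∑ y ∈ A', G.dist x y) :=
      Finset.sum_congr rfl fun x _ => hinsA _
    rw [e2, Finset.sum_add_distrib, hD1'']
    have e3 : ∑ y ∈ A, G.dist u y = ∑ x ∈ A, G.dist u x := rfl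
    rw [e3]; ring
  have hB1 : 1 ≤ B.card := Finset.card_pos.mpr ⟨u, hB⟩
  have hP2 : ∑ x ∈ A', ∑ y ∈ B, G.dist x y
      = B.card * (∑ x ∈ A, G.dist u x) + (A.card - 1) * ∑ x ∈ B, G.dist u x := by
    have e : ∀ x ∈ A', ∑ y ∈ B, G.dist x y
        = B.card * G.dist x u + ∑ y ∈ B, G.dist u y := by
      intro x hx
      have e' : ∀ y ∈ B, G.dist x y = G.dist x u + G.dist u y :=
        fun y hy => dist_cross hG hI hedge (hsubA x hx) hy
      rw [Finset.sum_congr rfl e', Finset.sum_add_distrib, Finset.sum_const,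
        smul_eq_mul]
    rw [Finset.sum_congr rfl e, Finset.sum_add_distrib, ← Finset.mul_sum, hD1'',
      Finset.sum_const, smul_eq_mul, hA'def, Finset.card_erase_of_mem hA]
  have hP3 : ∑ x ∈ B, ∑ y ∈ A', G.dist x y
      = B.card * (∑ x ∈ A, G.dist u x) + (A.card - 1) * ∑ x ∈ B, G.dist u x := by
    rw [← hP2, Finset.sum_comm]
    exact Finset.sum_congr rfl fun x _ => Finset.sum_congr rfl
      fun y _ => SimpleGraph.dist_comm
  have hT : ∑ x : V, ∑ y : V, G.dist x y
      = (∑ x ∈ A, ∑ y ∈ A, G.dist x y) + (∑ x ∈ B, ∑ y ∈ B, G.dist x y)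
        + 2 * ((A.card - 1) * (∑ x ∈ B, G.dist u x)
          + (B.card - 1) * (∑ x ∈ A, G.dist u x)) := by
    rw [hsplit (fun x => ∑ y : V, G.dist x y)]
    have e : ∀ x : V, ∑ y : V, G.dist x y
        = ∑ y ∈ A', G.dist x y + ∑ y ∈ B, G.dist x y := fun x => hsplit _
    rw [show (∑ x ∈ A', ∑ y : V, G.dist x y)
        = ∑ x ∈ A', (∑ y ∈ A', G.dist x y + ∑ y ∈ B, G.dist x y) from
      Finset.sum_congr rfl fun x _ => e x]
    rw [show (∑ x ∈ B, ∑ y : V, G.dist x y)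
        = ∑ x ∈ B, (∑ y ∈ A', G.dist x y + ∑ y ∈ B, G.dist x y) from
      Finset.sum_congr rfl fun x _ => e x]
    rw [Finset.sum_add_distrib, Finset.sum_add_distrib, hP2, hP3, hSA]
    have hmul : B.card * (∑ x ∈ A, G.dist u x)
        = (B.card - 1) * (∑ x ∈ A, G.dist u x) + ∑ x ∈ A, G.dist u x := by
      nth_rewrite 1 [← Nat.sub_add_cancel hB1]
      ring
    rw [hmul]
    ring
  have evenSA : Even (∑ x ∈ A, ∑ y ∈ A, G.dist x y) :=
    even_double_sum G.dist (fun x y => SimpleGraph.dist_comm)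
      (fun x => SimpleGraph.dist_self) A
  have evenSB : Even (∑ x ∈ B, ∑ y ∈ B, G.dist x y) :=
    even_double_sum G.dist (fun x y => SimpleGraph.dist_comm)
      (fun x => SimpleGraph.dist_self) B
  rw [wienerIndex, hT, hWA, hWB, hDA, hDB]
  obtain ⟨a, ha⟩ := evenSA
  obtain ⟨b, hb⟩ := evenSB
  rw [ha, hb]
  set k1 := (A.card - 1) * ∑ x ∈ B, G.dist u x
  set k2 := (B.card - 1) * ∑ x ∈ A, G.dist u x
  omega
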